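/- Let C be an MDS [n,k,d]_q code with q > n > 2. For every integer w with d ≤ w ≤ n and every subset X ⊆ {1,…,n} with |X| = w, there exists a codeword c ∈ C whose support is exactly X. -/

import Mathlib

/-- A non-binary MDS [n,k,d]_q code with q > n > 2 has, for every
weight d ≤ w ≤ n and every set X of w positions, a codeword whose support is
exactly X. -/
theorem mds_codeword_with_prescribed_support
    (q n k d : ℕ) (F : Type) [Field F] [Fintype F] [DecidableEq F]
    (hq : Fintype.card F = q)
    (hqn : n < q) (hn : 2 < n)
    (C : Submodule F (Fin n → F))
    (hk : Module.finrank F C = k)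
    (hmin : (∀ c ∈ C, c ≠ 0 → d ≤ hammingNorm c) ∧ ∃ c ∈ C, c ≠ 0 ∧ hammingNorm c = d)
    (hMDS : d = n - k + 1)
    (w : ℕ) (hw1 : d ≤ w) (hw2 : w ≤ n)
    (X : Finset (Fin n)) (hX : X.card = w) :
    ∃ c ∈ C, ∀ i, c i ≠ 0 ↔ i ∈ X := by
  classical
  obtain ⟨hmin1, _⟩ := hmin
  have hkn : k ≤ n := by
    have h1 := Submodule.finrank_le C
    rw [hk, Module.finrank_pi, Fintype.card_fin] at h1
    exact h1
  have hd1 : 1 ≤ d := by omega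
  -- the "vanishing on T" submodule
  set K : Finset (Fin n) → Submodule F (Fin n → F) := fun T =>
    LinearMap.ker (LinearMap.funLeft F F ((↑) : {i // i ∈ T} → Fin n)) with hK
  have memK : ∀ (T : Finset (Fin n)) (c : Fin n → F), c ∈ K T ↔ ∀ i ∈ T, c i = 0 := by
    intro T c
    simp [hK, LinearMap.mem_ker, funext_iff, Subtype.forall]
  -- key MDS fact: a codeword vanishing on ≥ n-d+1 positions is zero
  have keyA : ∀ c ∈ C, ∀ T : Finset (Fin n), n + 1 ≤ T.card + d →
      (∀ i ∈ T, c i = 0) → c = 0 := by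
    intro c hc T hT hvan
    by_contra hne
    have hd2 : d ≤ (Finset.univ.filter (fun i => c i ≠ 0)).card := hmin1 c hc hne
    have hsub : (Finset.univ.filter (fun i => c i ≠ 0)) ⊆ Tᶜ := by
      intro i hi
      rw [Finset.mem_filter] at hi
      rw [Finset.mem_compl]
      intro hiT
      exact hi.2 (hvan i hiT)
    have h3 := Finset.card_le_card hsub
    rw [Finset.card_compl, Fintype.card_fin] at h3
    have hTn : T.card ≤ n := by
      have := Finset.card_le_univ T
      simpa using this
    omega
  -- the shortened code D
  set D : Submodule F (Fin n → F) := C ⊓ K Xᶜ with hD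
  -- lower bound on finrank D
  have hDrank : w - d + 1 ≤ Module.finrank F D := by
    set f : C →ₗ[F] ({i // i ∈ Xᶜ} → F) :=
      (LinearMap.funLeft F F ((↑) : {i // i ∈ Xᶜ} → Fin n)).domRestrict C with hf
    have hker : LinearMap.ker f = Submodule.comap C.subtype D := by
      rw [hf, LinearMap.ker_domRestrict, hD, Submodule.comap_inf,
        Submodule.comap_subtype_self, top_inf_eq]
    have hkerD : Module.finrank F (LinearMap.ker f) = Module.finrank F D := by
      rw [hker]
      exact LinearEquiv.finrank_eq (Submodule.comapSubtypeEquivOfLe inf_le_left)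
    have hrn := LinearMap.finrank_range_add_finrank_ker f
    rw [hk, hkerD] at hrn
    have hrange : Module.finrank F (LinearMap.range f) ≤ n - w := by
      have h1 := Submodule.finrank_le (LinearMap.range f)
      rw [Module.finrank_pi] at h1
      have h2 : Fintype.card {i // i ∈ Xᶜ} = n - w := by
        rw [Fintype.card_coe, Finset.card_compl, Fintype.card_fin, hX]
      omega
    omega
  -- the subspaces W i
  set W : Fin n → Submodule F (Fin n → F) := fun i => C ⊓ K (insert i Xᶜ) with hW
  have hWD : ∀ i ∈ X, W i ≤ D := by
    intro i _
    refine inf_le_inf_left C ?_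
    intro c hc
    rw [memK] at hc ⊢
    intro j hj
    exact hc j (Finset.mem_insert_of_mem hj)
  -- upper bound on finrank (W i)
  have hWrank : ∀ i ∈ X, Module.finrank F (W i) ≤ w - d := by
    intro i hi
    obtain ⟨S, hSsub, hScard⟩ := Finset.exists_subset_card_eq
      (show w - d ≤ (X.erase i).card by rw [Finset.card_erase_of_mem hi, hX]; omega)
    set g : (W i) →ₗ[F] ({j // j ∈ S} → F) :=
      (LinearMap.funLeft F F ((↑) : {j // j ∈ S} → Fin n)).domRestrict (W i) with hg
    have hginj : Function.Injective g := by
      rw [← LinearMap.ker_eq_bot, Submodule.eq_bot_iff]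
      rintro ⟨u, hu⟩ hu0
      rw [LinearMap.mem_ker] at hu0
      obtain ⟨huC, huK⟩ := hu
      replace huK : ∀ j ∈ insert i Xᶜ, u j = 0 := (memK _ _).mp huK
      have hvanS : ∀ j ∈ S, u j = 0 := by
        intro j hj
        have := congrFun hu0 ⟨j, hj⟩
        simpa [hg] using this
      have hdisj : Disjoint (insert i Xᶜ) S := by
        rw [Finset.disjoint_left]
        intro a ha haS
        have haX := hSsub haS
        rw [Finset.mem_erase] at haX
        rcases Finset.mem_insert.mp ha with h | h
        · exact haX.1 h
        · exact (Finset.mem_compl.mp h) haX.2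
      have hcard : (insert i Xᶜ ∪ S).card = (n - w + 1) + (w - d) := by
        rw [Finset.card_union_of_disjoint hdisj,
          Finset.card_insert_of_notMem (by simpa using hi),
          Finset.card_compl, Fintype.card_fin, hX, hScard]
      have huz : u = 0 := by
        apply keyA u huC (insert i Xᶜ ∪ S)
        · omega
        · intro j hj
          rcases Finset.mem_union.mp hj with h | h
          · exact huK j h
          · exact hvanS j h
      exact Subtype.ext huz
    have := LinearMap.finrank_le_finrank_of_injective hginj
    rwa [Module.finrank_pi, Fintype.card_coe, hScard] at this
  -- counting argument
  have hq2 : 2 ≤ q := by omega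
  set A : Finset (Fin n → F) := Finset.univ.filter (· ∈ D) with hA
  set B : Finset (Fin n → F) := X.biUnion (fun i => Finset.univ.filter (· ∈ W i)) with hB
  have hAcard : q ^ (w - d + 1) ≤ A.card := by
    have h1 : A.card = Fintype.card D := (Fintype.card_subtype _).symm
    have h2 : Fintype.card D = Fintype.card F ^ Module.finrank F D :=
      Module.card_eq_pow_finrank
    rw [h1, h2, hq]
    exact Nat.pow_le_pow_right (by omega) hDrank
  have hBcard : B.card ≤ w * q ^ (w - d) := by
    calc B.card ≤ ∑ i ∈ X, (Finset.univ.filter (· ∈ W i)).card :=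
          Finset.card_biUnion_le
      _ ≤ ∑ _i ∈ X, q ^ (w - d) := by
          apply Finset.sum_le_sum
          intro i hi
          have h1 : (Finset.univ.filter (· ∈ W i)).card = Fintype.card (W i) :=
            (Fintype.card_subtype _).symm
          have h2 : Fintype.card (W i) = Fintype.card F ^ Module.finrank F (W i) :=
            Module.card_eq_pow_finrank
          rw [h1, h2, hq]
          exact Nat.pow_le_pow_right (by omega) (hWrank i hi)
      _ = w * q ^ (w - d) := by rw [Finset.sum_const, hX, smul_eq_mul]
  have hlt : B.card < A.card := by
    have hpow : 0 < q ^ (w - d) := Nat.pow_pos (by omega)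
    have : w * q ^ (w - d) < q * q ^ (w - d) := by
      apply Nat.mul_lt_mul_of_lt_of_le (by omega) le_rfl hpow
    have hq1 : q * q ^ (w - d) = q ^ (w - d + 1) := by ring
    omega
  have hne : (A \ B).Nonempty := by
    rw [← Finset.card_pos]
    have := Finset.le_card_sdiff B A
    omega
  obtain ⟨v, hv⟩ := hne
  rw [Finset.mem_sdiff] at hv
  obtain ⟨hvA, hvB⟩ := hv
  have hvD : v ∈ D := by
    rw [hA, Finset.mem_filter] at hvA
    exact hvA.2
  obtain ⟨hvC, hvK⟩ := hvD
  replace hvK : ∀ j ∈ Xᶜ, v j = 0 := (memK _ _).mp hvK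
  refine ⟨v, hvC, fun i => ⟨fun hvi => ?_, fun hiX hvi => ?_⟩⟩
  · by_contra hiX
    exact hvi (hvK i (Finset.mem_compl.mpr hiX))
  · apply hvB
    rw [hB, Finset.mem_biUnion]
    refine ⟨i, hiX, Finset.mem_filter.mpr ⟨Finset.mem_univ _, hvC, (memK _ _).mpr ?_⟩⟩
    intro j hj
    rcases Finset.mem_insert.mp hj with h | h
    · rw [h]; exact hvi
    · exact hvK j h
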